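/- Quantitative Li lemma: let X be L-embedded with L-projection P : X'' → X, let Y ⊂ X be a closed subspace, and suppose η ≥ 0 is such that ‖y + z‖ ≥ (1−η)(‖y‖ + ‖z‖) for all y ∈ Y and all z in Y^{⊥⊥} with Pz ∈ Y-complement as in the decomposition Y^{⊥⊥} = Y ⊕ Z. Then ‖Pz‖ ≤ 3η^{1/2}‖z‖ for all z ∈ Z. -/

import Mathlib

namespace NormedSpace

/-- The topological dual of a normed space, as `NormedSpace.Dual` was defined in the older
Mathlib (removed since; `StrongDual` does not elaborate for the triple dual in `IsMEmbedded`). -/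
def Dual (𝕜 : Type*) [NontriviallyNormedField 𝕜] (E : Type*) [SeminormedAddCommGroup E]
    [NormedSpace 𝕜 E] : Type _ := E →L[𝕜] 𝕜

noncomputable instance (𝕜 : Type*) [NontriviallyNormedField 𝕜] (E : Type*)
    [SeminormedAddCommGroup E] [NormedSpace 𝕜 E] : SeminormedAddCommGroup (Dual 𝕜 E) :=
  ContinuousLinearMap.toSeminormedAddCommGroup

noncomputable instance (𝕜 : Type*) [NontriviallyNormedField 𝕜] (E : Type*)
    [SeminormedAddCommGroup E] [NormedSpace 𝕜 E] : NormedSpace 𝕜 (Dual 𝕜 E) :=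
  ContinuousLinearMap.toNormedSpace

instance (𝕜 : Type*) [NontriviallyNormedField 𝕜] (E : Type*)
    [SeminormedAddCommGroup E] [NormedSpace 𝕜 E] : FunLike (Dual 𝕜 E) E 𝕜 :=
  ContinuousLinearMap.funLike

end NormedSpace

open NormedSpace Filter Topology

/-- A sequence spans `ℓ¹` asymptotically isometrically. -/
def SpansL1Asymptotically {X : Type*} [NormedAddCommGroup X] [NormedSpace ℝ X]
    (x : ℕ → X) : Prop :=
  ∃ δ : ℕ → ℝ, (∀ n, 0 ≤ δ n ∧ δ n < 1) ∧ Tendsto δ atTop (nhds 0) ∧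
    ∀ (N : ℕ) (α : ℕ → ℝ),
      (∑ n ∈ Finset.range N, (1 - δ n) * |α n|) ≤ ‖∑ n ∈ Finset.range N, α n • x n‖ ∧
      ‖∑ n ∈ Finset.range N, α n • x n‖ ≤ ∑ n ∈ Finset.range N, |α n|

/-- A sequence spans `ℓ¹` almost isometrically. -/
def SpansL1AlmostIsometrically {X : Type*} [NormedAddCommGroup X] [NormedSpace ℝ X]
    (x : ℕ → X) : Prop :=
  ∃ δ : ℕ → ℝ, (∀ n, 0 ≤ δ n ∧ δ n < 1) ∧ Tendsto δ atTop (nhds 0) ∧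
    ∀ (m M : ℕ) (α : ℕ → ℝ),
      (1 - δ m) * (∑ n ∈ Finset.Icc m M, |α n|) ≤ ‖∑ n ∈ Finset.Icc m M, α n • x n‖ ∧
      ‖∑ n ∈ Finset.Icc m M, α n • x n‖ ≤ ∑ n ∈ Finset.Icc m M, |α n|

/-- A sequence spans `c₀` asymptotically isometrically. -/
def SpansC0Asymptotically {X : Type*} [NormedAddCommGroup X] [NormedSpace ℝ X]
    (z : ℕ → X) : Prop :=
  ∃ δ : ℕ → ℝ, (∀ n, 0 ≤ δ n ∧ δ n < 1) ∧ Tendsto δ atTop (nhds 0) ∧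
    ∀ (N : ℕ) (hN : N ≠ 0) (α : ℕ → ℝ),
      ((Finset.range N).sup' (Finset.nonempty_range_iff.mpr hN)
          (fun n => (1 - δ n) * |α n|)) ≤ ‖∑ n ∈ Finset.range N, α n • z n‖ ∧
      ‖∑ n ∈ Finset.range N, α n • z n‖ ≤
        (Finset.range N).sup' (Finset.nonempty_range_iff.mpr hN)
          (fun n => (1 + δ n) * |α n|)

/-- `P` is an L-projection: an idempotent bounded operator with
`‖ξ‖ = ‖Pξ‖ + ‖ξ - Pξ‖` for all `ξ`. -/
def IsLProjection {E : Type*} [NormedAddCommGroup E] [NormedSpace ℝ E]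
    (P : E →L[ℝ] E) : Prop :=
  (∀ ξ, P (P ξ) = P ξ) ∧ ∀ ξ, ‖ξ‖ = ‖P ξ‖ + ‖ξ - P ξ‖

/-- `X` is L-embedded: the canonical image of `X` in its bidual is the range of an
L-projection. -/
def IsLEmbedded (X : Type*) [NormedAddCommGroup X] [NormedSpace ℝ X] : Prop :=
  ∃ P : StrongDual ℝ (StrongDual ℝ X) →L[ℝ] StrongDual ℝ (StrongDual ℝ X),
    (∀ ξ, P (P ξ) = P ξ) ∧ (∀ ξ, ‖ξ‖ = ‖P ξ‖ + ‖ξ - P ξ‖) ∧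
      Set.range P = Set.range (inclusionInDoubleDual ℝ X)

/-- `X` is M-embedded: the annihilator of `X` in `X'''` is the range of an
L-projection on `X'''`. -/
def IsMEmbedded (X : Type*) [NormedAddCommGroup X] [NormedSpace ℝ X] : Prop :=
  ∃ P : Dual ℝ (Dual ℝ (Dual ℝ X)) →L[ℝ] Dual ℝ (Dual ℝ (Dual ℝ X)),
    (∀ φ, P (P φ) = P φ) ∧ (∀ φ, ‖φ‖ = ‖P φ‖ + ‖φ - P φ‖) ∧
      Set.range P = {φ | ∀ x : X, φ (inclusionInDoubleDual ℝ X x) = 0}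

/-- `X` fails the fixed point property: there are a nonempty closed bounded convex set and
a contractive self-map without fixed point. -/
def FailsFPP (X : Type*) [NormedAddCommGroup X] [NormedSpace ℝ X] : Prop :=
  ∃ C : Set X, C.Nonempty ∧ IsClosed C ∧ Bornology.IsBounded C ∧ Convex ℝ C ∧
    ∃ f : X → X, Set.MapsTo f C C ∧
      (∀ x ∈ C, ∀ y ∈ C, x ≠ y → ‖f x - f y‖ < ‖x - y‖) ∧
      ∀ x ∈ C, f x ≠ x

set_option maxHeartbeats 1000000 in
private lemma aux_ext19 {X : Type*} [NormedAddCommGroup X] [NormedSpace ℝ X]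
    (Y : Submodule ℝ X) (x : X) (hxY : x ∉ Y) (ψ0 : StrongDual ℝ X) (c' : ℝ)
    (hbd : ∀ y : X, y ∈ Y → ∀ l : ℝ, |ψ0 y + l * c'| ≤ ‖y + l • x‖) :
    ∃ g : StrongDual ℝ X, ‖g‖ ≤ 1 ∧ (∀ y ∈ Y, g y = ψ0 y) ∧ g x = c' := by
  classical
  let pY : X →ₗ.[ℝ] ℝ := ⟨Y, (ψ0 : X →ₗ[ℝ] ℝ).comp Y.subtype⟩
  have hxdom : x ∉ pY.domain := hxY
  let Φ : X →ₗ.[ℝ] ℝ := pY.supSpanSingleton x c' hxdom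
  have hbound : ∀ w : Φ.domain, ‖Φ.toFun w‖ ≤ 1 * ‖w‖ := by
    rintro ⟨w, hw⟩
    rw [one_mul]
    have hw' : w ∈ Y ⊔ (ℝ ∙ x) := hw
    obtain ⟨y, hy, v, hv, rfl⟩ := Submodule.mem_sup.mp hw'
    obtain ⟨l, rfl⟩ := Submodule.mem_span_singleton.mp hv
    have happ : Φ.toFun ⟨y + l • x, hw⟩ = pY ⟨y, hy⟩ + l • c' :=
      pY.supSpanSingleton_apply_mk x c' hxdom y hy l
    rw [happ]
    have hψ : pY ⟨y, hy⟩ = ψ0 y := rfl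
    rw [hψ, smul_eq_mul]
    exact hbd y hy l
  let φL : Φ.domain →L[ℝ] ℝ := Φ.toFun.mkContinuous 1 hbound
  obtain ⟨g, hg_ext, hg_norm⟩ := exists_extension_norm_eq Φ.domain φL
  refine ⟨g, ?_, ?_, ?_⟩
  · rw [hg_norm]
    exact LinearMap.mkContinuous_norm_le _ zero_le_one _
  · intro y hy
    have hyW : y ∈ Φ.domain := Submodule.mem_sup_left hy
    have hmem : y + (0:ℝ) • x ∈ Φ.domain :=
      Submodule.add_mem _ (Submodule.mem_sup_left hy)
        (Submodule.mem_sup_right (Submodule.smul_mem _ _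
          (Submodule.mem_span_singleton_self x)))
    have he : (⟨y, hyW⟩ : Φ.domain) = ⟨y + (0:ℝ) • x, hmem⟩ := Subtype.ext (by simp)
    have happ : Φ.toFun ⟨y + (0:ℝ) • x, hmem⟩ = pY ⟨y, hy⟩ + (0:ℝ) • c' :=
      pY.supSpanSingleton_apply_mk x c' hxdom y hy 0
    calc g y = φL ⟨y, hyW⟩ := hg_ext ⟨y, hyW⟩
      _ = Φ.toFun ⟨y, hyW⟩ := rfl
      _ = Φ.toFun ⟨y + (0:ℝ) • x, hmem⟩ := by rw [he]
      _ = pY ⟨y, hy⟩ + (0:ℝ) • c' := happ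
      _ = ψ0 y := by rw [zero_smul, add_zero]; rfl
  · have hxW : x ∈ Φ.domain :=
      Submodule.mem_sup_right (Submodule.mem_span_singleton_self x)
    have hmem : (0:X) + (1:ℝ) • x ∈ Φ.domain :=
      Submodule.add_mem _ (Submodule.mem_sup_left (Submodule.zero_mem Y))
        (Submodule.mem_sup_right (Submodule.smul_mem _ _
          (Submodule.mem_span_singleton_self x)))
    have he : (⟨x, hxW⟩ : Φ.domain) = ⟨(0:X) + (1:ℝ) • x, hmem⟩ := Subtype.ext (by simp)
    have happ : Φ.toFun ⟨(0:X) + (1:ℝ) • x, hmem⟩ = pY ⟨0, Y.zero_mem⟩ + (1:ℝ) • c' :=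
      pY.supSpanSingleton_apply_mk x c' hxdom 0 Y.zero_mem 1
    calc g x = φL ⟨x, hxW⟩ := hg_ext ⟨x, hxW⟩
      _ = Φ.toFun ⟨x, hxW⟩ := rfl
      _ = Φ.toFun ⟨(0:X) + (1:ℝ) • x, hmem⟩ := by rw [he]
      _ = pY ⟨0, Y.zero_mem⟩ + (1:ℝ) • c' := happ
      _ = c' := by
          have h0 : pY ⟨0, Y.zero_mem⟩ = 0 := by
            show ψ0 (0:X) = 0
            simp
          rw [h0, one_smul, zero_add]

abbrev BiD (E : Type*) [NormedAddCommGroup E] [NormedSpace ℝ E] : Type _ := E →L[ℝ] ℝ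

set_option maxHeartbeats 2000000 in
theorem stmt19_core {X : Type*} [NormedAddCommGroup X] [NormedSpace ℝ X] [CompleteSpace X]
    (ι : X →L[ℝ] BiD (StrongDual ℝ X)) (hι : ∀ v f, ι v f = f v) (hιn : ∀ v, ‖ι v‖ = ‖v‖)
    (P : BiD (StrongDual ℝ X) →L[ℝ] BiD (StrongDual ℝ X))
    (hP : (∀ ξ, P (P ξ) = P ξ) ∧ ∀ ξ, ‖ξ‖ = ‖P ξ‖ + ‖ξ - P ξ‖)
    (hrange : Set.range P = Set.range (ι))
    (Y : Submodule ℝ X) (hYc : IsClosed (Y : Set X))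
    (Z : Submodule ℝ (BiD (StrongDual ℝ X))) (hZc : IsClosed (Z : Set (BiD (StrongDual ℝ X))))
    (η : ℝ) (hη : 0 ≤ η)
    (hZsub : ∀ z ∈ Z, ∀ f : StrongDual ℝ X, (∀ y ∈ Y, f y = 0) → z f = 0)
    (hdecomp : ∀ ξ : BiD (StrongDual ℝ X),
      (∀ f : StrongDual ℝ X, (∀ y ∈ Y, f y = 0) → ξ f = 0) →
      ∃ y ∈ Y, ∃ z ∈ Z, ξ = ι y + z)
    (hest : ∀ y ∈ Y, ∀ z ∈ Z,
      (1 - η) * (‖y‖ + ‖z‖) ≤ ‖ι y + z‖) :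
    ∀ z ∈ Z, ‖P z‖ ≤ 3 * Real.sqrt η * ‖z‖ := by
  classical
  obtain ⟨hPidem, hL⟩ := hP
  intro z hz
  have hPz_le : ‖P z‖ ≤ ‖z‖ := by
    have h := hL z
    have h2 := norm_nonneg (z - P z)
    linarith
  have hsqrt := Real.sqrt_nonneg η
  by_cases hη1 : 1 ≤ 3 * Real.sqrt η
  · calc ‖P z‖ ≤ ‖z‖ := hPz_le
      _ = 1 * ‖z‖ := (one_mul _).symm
      _ ≤ 3 * Real.sqrt η * ‖z‖ := mul_le_mul_of_nonneg_right hη1 (norm_nonneg z)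
  push_neg at hη1
  have hsq : Real.sqrt η * Real.sqrt η = η := Real.mul_self_sqrt hη
  have hη9 : η < 1 := by nlinarith
  have hnorm_incl : ∀ v : X, ‖ι v‖ = ‖v‖ := fun v =>
    hιn v
  -- main claim: ‖P z‖ ≤ η * ‖z‖
  suffices hmain : ‖P z‖ ≤ η * ‖z‖ by
    have hse : Real.sqrt η ≤ 1 := by nlinarith
    calc ‖P z‖ ≤ η * ‖z‖ := hmain
      _ = Real.sqrt η * Real.sqrt η * ‖z‖ := by rw [hsq]
      _ ≤ 3 * Real.sqrt η * ‖z‖ :=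
          mul_le_mul_of_nonneg_right (by nlinarith) (norm_nonneg z)
  by_contra hcon
  push_neg at hcon
  -- hcon : η * ‖z‖ < ‖P z‖
  obtain ⟨x, hx⟩ : P z ∈ Set.range (ι) := by
    rw [← hrange]; exact ⟨z, rfl⟩
  have hax : ‖x‖ = ‖P z‖ := by rw [← hx, hnorm_incl]
  have hfixY : ∀ v : X, P (ι v) = ι v := by
    intro v
    have hv : ι v ∈ Set.range P := by
      rw [hrange]; exact ⟨v, rfl⟩
    obtain ⟨ζ, hζ⟩ := hv
    rw [← hζ, hPidem]
  have hs : ‖z - P z‖ = ‖z‖ - ‖P z‖ := by have := hL z; linarith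
  set c : ℝ := ‖P z‖ - η * ‖z‖ with hc
  have hcpos : 0 < c := by rw [hc]; linarith
  -- key estimate T1
  have T1 : ∀ y ∈ Y, ∀ l : ℝ, (1 - η) * ‖y‖ + |l| * c ≤ ‖y + l • x‖ := by
    intro y hy l
    have h1 := hest y hy (l • z) (Z.smul_mem l hz)
    have h2 : ι y + l • z
        = ι (y + l • x) + l • (z - P z) := by
      rw [map_add, map_smul, hx, smul_sub]
      abel
    have h3 : ‖ι y + l • z‖ = ‖y + l • x‖ + |l| * ‖z - P z‖ := by
      rw [h2]
      have hp : P (ι (y + l • x) + l • (z - P z))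
          = ι (y + l • x) := by
        rw [map_add, map_smul, map_sub, hPidem, sub_self, smul_zero, add_zero, hfixY]
      have hLL := hL (ι (y + l • x) + l • (z - P z))
      rw [hp, add_sub_cancel_left] at hLL
      rw [hLL, hnorm_incl, norm_smul, Real.norm_eq_abs]
    have h4 : ‖l • z‖ = |l| * ‖z‖ := by rw [norm_smul, Real.norm_eq_abs]
    rw [h4, h3, hs] at h1
    have e3 : |l| * c = |l| * ‖P z‖ - η * (|l| * ‖z‖) := by rw [hc]; ring
    have e1 : (1 - η) * (‖y‖ + |l| * ‖z‖)
        = (1 - η) * ‖y‖ + |l| * ‖z‖ - η * (|l| * ‖z‖) := by ring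
    have e2 : |l| * (‖z‖ - ‖P z‖) = |l| * ‖z‖ - |l| * ‖P z‖ := by ring
    linarith
  have hxY : x ∉ Y := by
    intro hxy
    have h := T1 (-x) (Y.neg_mem hxy) 1
    simp only [one_smul, neg_add_cancel, norm_zero, norm_neg, abs_one, one_mul] at h
    nlinarith [norm_nonneg x]
  -- key functional estimate
  have key : ∀ f : StrongDual ℝ X, ‖f‖ ≤ 1 → (1 - η) * z f ≤ (1 + η) * ‖z‖ - 2 * ‖P z‖ := by
    intro f hf
    have h1η : (0:ℝ) ≤ 1 - η := by linarith
    have hbd : ∀ y : X, y ∈ Y → ∀ l : ℝ,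
        |((1 - η) • f : StrongDual ℝ X) y + l * (-c)| ≤ ‖y + l • x‖ := by
      intro y hy l
      have hfy : |f y| ≤ ‖y‖ := by
        calc |f y| = ‖f y‖ := rfl
          _ ≤ ‖f‖ * ‖y‖ := f.le_opNorm y
          _ ≤ 1 * ‖y‖ := mul_le_mul_of_nonneg_right hf (norm_nonneg y)
          _ = ‖y‖ := one_mul _
      have hT := T1 y hy l
      have hsm : ((1 - η) • f : StrongDual ℝ X) y = (1 - η) * f y := rfl
      rw [hsm]
      calc |(1 - η) * f y + l * (-c)| ≤ |(1 - η) * f y| + |l * (-c)| := abs_add_le _ _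
        _ = (1 - η) * |f y| + |l| * c := by
            rw [abs_mul, abs_of_nonneg h1η, abs_mul, abs_neg, abs_of_pos hcpos]
        _ ≤ (1 - η) * ‖y‖ + |l| * c := by
            have := mul_le_mul_of_nonneg_left hfy h1η
            linarith
        _ ≤ ‖y + l • x‖ := hT
    obtain ⟨g, hg1, hgY0, hgx⟩ := aux_ext19 Y x hxY ((1 - η) • f) (-c) hbd
    have hgY : ∀ y ∈ Y, g y = (1 - η) * f y := fun y hy => hgY0 y hy
    -- z g = (1-η) z f
    have hker : z (g - (1 - η) • f) = 0 := by
      refine hZsub z hz _ (fun y hy => ?_)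
      simp only [ContinuousLinearMap.sub_apply, ContinuousLinearMap.smul_apply,
        smul_eq_mul]
      rw [hgY y hy]
      ring
    have hzg : z g = (1 - η) * z f := by
      rw [map_sub, map_smul, smul_eq_mul, sub_eq_zero] at hker
      linarith [hker]
    -- upper bound on z g
    have hsplit : z g = P z g + (z - P z) g := by
      simp [ContinuousLinearMap.sub_apply]
    have h1 : P z g = -c := by
      rw [← hx, hι]
      exact hgx
    have h2 : (z - P z) g ≤ ‖z - P z‖ * ‖g‖ := by
      calc (z - P z) g ≤ |(z - P z) g| := le_abs_self _
        _ = ‖(z - P z) g‖ := rfl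
        _ ≤ ‖z - P z‖ * ‖g‖ := (z - P z).le_opNorm g
    have h3 : ‖z - P z‖ * ‖g‖ ≤ ‖z - P z‖ * 1 :=
      mul_le_mul_of_nonneg_left hg1 (norm_nonneg _)
    have hup : z g ≤ -c + (‖z‖ - ‖P z‖) := by
      rw [hsplit, h1]
      rw [hs] at h2 h3
      linarith
    rw [hzg] at hup
    rw [hc] at hup
    linarith
  -- conclude: contradiction with hcon
  have h1η : (0:ℝ) < 1 - η := by linarith
  have hK0 : 0 ≤ (1 + η) * ‖z‖ - 2 * ‖P z‖ := by
    have := key 0 (by simp)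
    simpa using this
  set K : ℝ := ((1 + η) * ‖z‖ - 2 * ‖P z‖) / (1 - η) with hKdef
  have hK0' : 0 ≤ K := div_nonneg hK0 (le_of_lt h1η)
  have hball : ∀ f : StrongDual ℝ X, ‖f‖ ≤ 1 → z f ≤ K := by
    intro f hf
    rw [hKdef, le_div_iff₀ h1η]
    linarith [key f hf, mul_comm (z f) (1 - η)]
  have hnorm : ‖z‖ ≤ K := by
    refine ContinuousLinearMap.opNorm_le_bound z hK0' (fun f => ?_)
    rcases eq_or_ne f 0 with rfl | hf0
    · simp
    · have hfpos : 0 < ‖f‖ := norm_pos_iff.mpr hf0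
      have hu : ‖(‖f‖⁻¹ • f)‖ ≤ 1 := by
        rw [norm_smul, norm_inv, norm_norm, inv_mul_cancel₀ hfpos.ne']
      have hp := hball _ hu
      have hmu : ‖-(‖f‖⁻¹ • f)‖ ≤ 1 := by rwa [norm_neg]
      have hm := hball _ hmu
      rw [map_neg, map_smul, smul_eq_mul] at hm
      rw [map_smul, smul_eq_mul] at hp
      have habs : |‖f‖⁻¹ * z f| ≤ K := abs_le.mpr ⟨by linarith, hp⟩
      rw [abs_mul, abs_inv, abs_of_pos hfpos] at habs
      have hfin : |z f| ≤ K * ‖f‖ := by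
        calc |z f| = ‖f‖ * (‖f‖⁻¹ * |z f|) := by field_simp
          _ ≤ ‖f‖ * K := mul_le_mul_of_nonneg_left habs (norm_nonneg f)
          _ = K * ‖f‖ := mul_comm _ _
      calc ‖z f‖ = |z f| := rfl
        _ ≤ K * ‖f‖ := hfin
  rw [hKdef, le_div_iff₀ h1η] at hnorm
  nlinarith

theorem stmt19 {X : Type*} [NormedAddCommGroup X] [NormedSpace ℝ X] [CompleteSpace X]
    (P : StrongDual ℝ (StrongDual ℝ X) →L[ℝ] StrongDual ℝ (StrongDual ℝ X))
    (hP : (∀ ξ, P (P ξ) = P ξ) ∧ ∀ ξ, ‖ξ‖ = ‖P ξ‖ + ‖ξ - P ξ‖)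
    (hrange : Set.range P = Set.range (inclusionInDoubleDual ℝ X))
    (Y : Submodule ℝ X) (hYc : IsClosed (Y : Set X))
    (Z : Submodule ℝ (StrongDual ℝ (StrongDual ℝ X))) (hZc : IsClosed (Z : Set (StrongDual ℝ (StrongDual ℝ X))))
    (η : ℝ) (hη : 0 ≤ η)
    (hZsub : ∀ z ∈ Z, ∀ f : StrongDual ℝ X, (∀ y ∈ Y, f y = 0) → z f = 0)
    (hdecomp : ∀ ξ : StrongDual ℝ (StrongDual ℝ X),
      (∀ f : StrongDual ℝ X, (∀ y ∈ Y, f y = 0) → ξ f = 0) →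
      ∃ y ∈ Y, ∃ z ∈ Z, ξ = inclusionInDoubleDual ℝ X y + z)
    (hest : ∀ y ∈ Y, ∀ z ∈ Z,
      (1 - η) * (‖y‖ + ‖z‖) ≤ ‖inclusionInDoubleDual ℝ X y + z‖) :
    ∀ z ∈ Z, ‖P z‖ ≤ 3 * Real.sqrt η * ‖z‖ := by
  exact stmt19_core (inclusionInDoubleDual ℝ X) (fun v f => rfl)
    (fun v => (inclusionInDoubleDualLi ℝ (E := X)).norm_map v) P hP hrange Y hYc Z hZc η hη hZsub hdecomp hest
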